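/- Key kernel estimate behind Proposition 4.2: let T > 0, α ∈ (0, 1/2) and C₀ ≥ 0. There exists a constant C₁ = C₁(T, α, C₀) > 0 such that for every N ∈ ℕ with N ≥ 1, setting h = T/N, and for every measurable function g : [0,T] × [0,T] → [0, ∞) satisfying (i) g(t, s) ≤ C₀ (|t − s| + h) for all t, s ∈ [0, T], and (ii) g(t, s) = 0 whenever there exists n ∈ ℕ with both t and s in [nh, (n+1)h), one has ∫_0^T ∫_0^T g(t, s) |t − s|^{−1−2α} dt ds ≤ C₁. -/

import Mathlib

open MeasureTheory Set
open scoped ENNReal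

section helpers

/-- translation-reflection comparison: `∫_A f(a-s) ds ≤ ∫_B f` when `a - A ⊆ B`. -/
lemma lint_comp_sub_left (a : ℝ) (f : ℝ → ℝ≥0∞) (hf : Measurable f)
    {A B : Set ℝ} (hA : MeasurableSet A) (hB : MeasurableSet B)
    (hAB : ∀ s ∈ A, a - s ∈ B) :
    ∫⁻ s in A, f (a - s) ≤ ∫⁻ u in B, f u := by
  have hmp : MeasurePreserving (fun t : ℝ => a - t) volume volume := by
    simpa [sub_eq_add_neg, Function.comp_def] using
      (measurePreserving_add_left (volume : Measure ℝ) a).comp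
        (Measure.measurePreserving_neg volume)
  calc ∫⁻ s in A, f (a - s)
      = ∫⁻ s in A, (B.indicator f) (a - s) := by
        refine setLIntegral_congr_fun hA (fun s hs => ?_)
        rw [indicator_of_mem (hAB s hs)]
    _ ≤ ∫⁻ s, (B.indicator f) (a - s) := setLIntegral_le_lintegral _ _
    _ = ∫⁻ u, (B.indicator f) u := hmp.lintegral_comp (hf.indicator hB)
    _ = ∫⁻ u in B, f u := lintegral_indicator hB f

lemma lint_comp_sub_right (c : ℝ) (f : ℝ → ℝ≥0∞) (hf : Measurable f)
    {A B : Set ℝ} (hA : MeasurableSet A) (hB : MeasurableSet B)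
    (hAB : ∀ s ∈ A, s - c ∈ B) :
    ∫⁻ s in A, f (s - c) ≤ ∫⁻ u in B, f u := by
  calc ∫⁻ s in A, f (s - c)
      = ∫⁻ s in A, (B.indicator f) (s - c) := by
        refine setLIntegral_congr_fun hA (fun s hs => ?_)
        rw [indicator_of_mem (hAB s hs)]
    _ ≤ ∫⁻ s, (B.indicator f) (s - c) := setLIntegral_le_lintegral _ _
    _ = ∫⁻ u, (B.indicator f) u :=
        (measurePreserving_sub_right volume c).lintegral_comp (hf.indicator hB)
    _ = ∫⁻ u in B, f u := lintegral_indicator hB f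

/-- value of `∫_0^L u^e du` as a lintegral, for `-1 < e < 0`. -/
lemma lint_Ioo_rpow {e L : ℝ} (he : -1 < e) (hL : 0 < L) :
    ∫⁻ u in Ioo (0:ℝ) L, ENNReal.ofReal (u ^ e) = ENNReal.ofReal (L ^ (e + 1) / (e + 1)) := by
  have hint : IntegrableOn (fun u : ℝ => u ^ e) (Ioo 0 L) volume :=
    ((intervalIntegral.intervalIntegrable_rpow' he (a := 0) (b := L)).1).mono_set
      Ioo_subset_Ioc_self
  have hnn : 0 ≤ᶠ[ae (volume.restrict (Ioo (0:ℝ) L))] fun u : ℝ => u ^ e := by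
    filter_upwards [ae_restrict_mem measurableSet_Ioo] with u hu
    exact Real.rpow_nonneg hu.1.le e
  rw [← ofReal_integral_eq_lintegral_ofReal hint hnn]
  congr 1
  rw [← integral_Ioc_eq_integral_Ioo, ← intervalIntegral.integral_of_le hL.le,
    integral_rpow (Or.inl he), Real.zero_rpow (by linarith), sub_zero]

/-- base version with ENNReal rpow of `ofReal`, over `Ioo 0 L`. -/
lemma lint_Ioo_ofReal_rpow {e L : ℝ} (he : -1 < e) (hL : 0 < L) :
    ∫⁻ u in Ioo (0:ℝ) L, (ENNReal.ofReal u) ^ e = ENNReal.ofReal (L ^ (e + 1) / (e + 1)) := by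
  rw [← lint_Ioo_rpow he hL]
  refine setLIntegral_congr_fun measurableSet_Ioo
    (fun u hu => ?_)
  exact ENNReal.ofReal_rpow_of_pos hu.1

/-- tail integral bound: `∫_{|u| ≥ d} |u|^(-1-2α) du ≤ (ofReal d)^(-2α) * (1/α)`. -/
lemma lint_tail {α : ℝ} (hα : 0 < α) (hα' : α < 1/2) {d : ℝ} (hd : 0 ≤ d) :
    ∫⁻ u in {u : ℝ | d ≤ |u|}, ENNReal.ofReal (|u| ^ (-1 - 2*α))
      ≤ (ENNReal.ofReal d) ^ (-(2*α)) * ENNReal.ofReal (1/α) := by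
  rcases hd.eq_or_lt with rfl | hd
  · rw [ENNReal.ofReal_zero, ENNReal.zero_rpow_of_neg (by linarith)]
    rw [ENNReal.top_mul (by simp [ENNReal.ofReal_eq_zero]; positivity)]
    exact le_top
  · have hset : {u : ℝ | d ≤ |u|} = Iic (-d) ∪ Ici d := by
      ext u
      simp only [mem_setOf_eq, le_abs, mem_union, mem_Iic, mem_Ici]
      constructor
      · rintro (h | h)
        · right; exact h
        · left; linarith
      · rintro (h | h)
        · right; linarith
        · left; exact h
    have hmeasf : Measurable fun u : ℝ => ENNReal.ofReal (|u| ^ (-1 - 2*α)) := by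
      fun_prop
    have hIci : ∫⁻ u in Ici d, ENNReal.ofReal (|u| ^ (-1 - 2*α))
        = ENNReal.ofReal (d ^ (-(2*α)) / (2*α)) := by
      rw [← setLIntegral_congr (Ioi_ae_eq_Ici (a := d))]
      have hcongr : ∫⁻ u in Ioi d, ENNReal.ofReal (|u| ^ (-1 - 2*α))
          = ∫⁻ u in Ioi d, ENNReal.ofReal (u ^ (-1 - 2*α)) := by
        refine setLIntegral_congr_fun measurableSet_Ioi
          (fun u hu => ?_)
        rw [abs_of_pos (lt_trans hd hu)]
      rw [hcongr]
      have hint : IntegrableOn (fun u : ℝ => u ^ (-1 - 2*α)) (Ioi d) volume :=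
        integrableOn_Ioi_rpow_of_lt (by linarith) hd
      have hnn : 0 ≤ᶠ[ae (volume.restrict (Ioi d))] fun u : ℝ => u ^ (-1 - 2*α) := by
        filter_upwards [ae_restrict_mem measurableSet_Ioi] with u hu
        exact Real.rpow_nonneg (le_of_lt (lt_trans hd hu)) _
      rw [← ofReal_integral_eq_lintegral_ofReal hint hnn,
        integral_Ioi_rpow_of_lt (by linarith) hd]
      congr 1
      have h1 : (-1 - 2*α) + 1 = -(2*α) := by ring
      rw [h1]
      field_simp
    have hIic : ∫⁻ u in Iic (-d), ENNReal.ofReal (|u| ^ (-1 - 2*α))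
        ≤ ENNReal.ofReal (d ^ (-(2*α)) / (2*α)) := by
      have h2 : ∫⁻ u in Iic (-d), ENNReal.ofReal (|u| ^ (-1 - 2*α))
          = ∫⁻ u in Iic (-d), (fun v : ℝ => ENNReal.ofReal (|v| ^ (-1 - 2*α))) (0 - u) := by
        refine setLIntegral_congr_fun measurableSet_Iic
          (fun u _ => ?_)
        simp [abs_neg]
      rw [h2]
      refine le_of_le_of_eq (lint_comp_sub_left 0 _ hmeasf measurableSet_Iic measurableSet_Ici
        (fun s hs => ?_)) hIci
      simp only [mem_Iic] at hs
      simp only [mem_Ici]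
      linarith
    calc ∫⁻ u in {u : ℝ | d ≤ |u|}, ENNReal.ofReal (|u| ^ (-1 - 2*α))
        = ∫⁻ u in Iic (-d) ∪ Ici d, ENNReal.ofReal (|u| ^ (-1 - 2*α)) := by rw [hset]
      _ ≤ _ + _ := lintegral_union_le _ _ _
      _ ≤ ENNReal.ofReal (d ^ (-(2*α)) / (2*α)) + ENNReal.ofReal (d ^ (-(2*α)) / (2*α)) :=
          add_le_add hIic (le_of_eq hIci)
      _ = ENNReal.ofReal (d ^ (-(2*α)) * (1/α)) := by
          rw [← ENNReal.ofReal_add (by positivity) (by positivity)]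
          congr 1; field_simp; ring
      _ = (ENNReal.ofReal d) ^ (-(2*α)) * ENNReal.ofReal (1/α) := by
          rw [ENNReal.ofReal_mul (by positivity), ENNReal.ofReal_rpow_of_pos hd]
/-- `∫_D |u|^e du = L^{e+1}/(e+1)` for any `D` a.e. equal to `Ioo 0 L`. -/
lemma lint_abs_Ioo_like {e L : ℝ} (he : -1 < e) (hL : 0 < L) {D : Set ℝ}
    (hD : D =ᵐ[volume] Ioo (0:ℝ) L) :
    ∫⁻ u in D, ENNReal.ofReal (|u| ^ e) = ENNReal.ofReal (L ^ (e + 1) / (e + 1)) := by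
  rw [setLIntegral_congr hD, ← lint_Ioo_rpow he hL]
  refine setLIntegral_congr_fun measurableSet_Ioo
    (fun u hu => ?_)
  rw [abs_of_pos hu.1]

/-- symmetric interval bound used for Term 1. -/
lemma lint_sym_bound {e T : ℝ} (he : -1 < e) (he' : e < 0) (hT : 0 < T) {t : ℝ}
    (ht : t ∈ Icc (0:ℝ) T) :
    ∫⁻ s in Icc (0:ℝ) T, ENNReal.ofReal (|t - s| ^ e)
      ≤ ENNReal.ofReal (2 * (T ^ (e + 1) / (e + 1))) := by
  have hmeasf : Measurable fun u : ℝ => ENNReal.ofReal (|u| ^ e) := by fun_prop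
  have h1 : ∫⁻ s in Icc (0:ℝ) T, ENNReal.ofReal (|t - s| ^ e)
      ≤ ∫⁻ u in Icc (-T) T, ENNReal.ofReal (|u| ^ e) := by
    refine lint_comp_sub_left t _ hmeasf measurableSet_Icc measurableSet_Icc fun s hs => ?_
    obtain ⟨hs0, hsT⟩ := hs; obtain ⟨ht0, htT⟩ := ht
    exact ⟨by linarith, by linarith⟩
  refine h1.trans ?_
  have hsplit : Icc (-T) T = Ico (-T) 0 ∪ Icc 0 T := by
    ext u
    simp only [mem_Icc, mem_union, mem_Ico]
    constructor
    · rintro ⟨h1, h2⟩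
      rcases lt_or_ge u 0 with h | h
      · exact Or.inl ⟨h1, h⟩
      · exact Or.inr ⟨h, h2⟩
    · rintro (⟨h1, h2⟩ | ⟨h1, h2⟩) <;> constructor <;> linarith
  rw [hsplit]
  have hneg : ∫⁻ u in Ico (-T) 0, ENNReal.ofReal (|u| ^ e)
      ≤ ENNReal.ofReal (T ^ (e + 1) / (e + 1)) := by
    have h2 : ∫⁻ u in Ico (-T) 0, ENNReal.ofReal (|u| ^ e)
        = ∫⁻ u in Ico (-T) 0, (fun v : ℝ => ENNReal.ofReal (|v| ^ e)) (0 - u) := by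
      refine setLIntegral_congr_fun measurableSet_Ico
        (fun u _ => ?_)
      simp [abs_neg]
    rw [h2]
    refine le_of_le_of_eq (lint_comp_sub_left 0 _ hmeasf measurableSet_Ico measurableSet_Ioc
      fun s hs => ?_) (lint_abs_Ioo_like he hT Ioo_ae_eq_Ioc.symm)
    obtain ⟨h1, h2⟩ := hs
    exact ⟨by linarith, by linarith⟩
  have hpos : ∫⁻ u in Icc (0:ℝ) T, ENNReal.ofReal (|u| ^ e)
      = ENNReal.ofReal (T ^ (e + 1) / (e + 1)) := lint_abs_Ioo_like he hT Ioo_ae_eq_Icc.symm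
  calc ∫⁻ u in Ico (-T) 0 ∪ Icc 0 T, ENNReal.ofReal (|u| ^ e)
      ≤ _ + _ := lintegral_union_le _ _ _
    _ ≤ ENNReal.ofReal (T ^ (e + 1) / (e + 1)) + ENNReal.ofReal (T ^ (e + 1) / (e + 1)) :=
        add_le_add hneg (le_of_eq hpos)
    _ = ENNReal.ofReal (2 * (T ^ (e + 1) / (e + 1))) := by
        rw [← ENNReal.ofReal_add (div_nonneg (Real.rpow_nonneg hT.le _) (by linarith))
          (div_nonneg (Real.rpow_nonneg hT.le _) (by linarith))]
        congr 1; ring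

/-- cell integral bound for Term 2. -/
lemma lint_cell {e h c : ℝ} (he : -1 < e) (he' : e < 0) (hh : 0 < h) :
    ∫⁻ t in Ico c (c + h), (ENNReal.ofReal (min (t - c) (c + h - t))) ^ e
      ≤ 2 * ENNReal.ofReal (h ^ (e + 1) / (e + 1)) := by
  have hm1 : Measurable fun t : ℝ => (ENNReal.ofReal (t - c)) ^ e := by fun_prop
  have hm2 : Measurable fun t : ℝ => (ENNReal.ofReal (c + h - t)) ^ e := by fun_prop
  have hpt : ∀ t : ℝ, (ENNReal.ofReal (min (t - c) (c + h - t))) ^ e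
      ≤ (ENNReal.ofReal (t - c)) ^ e + (ENNReal.ofReal (c + h - t)) ^ e := by
    intro t
    rcases min_cases (t - c) (c + h - t) with ⟨hmin, _⟩ | ⟨hmin, _⟩ <;> rw [hmin]
    · exact le_add_right le_rfl
    · exact le_add_left le_rfl
  calc ∫⁻ t in Ico c (c + h), (ENNReal.ofReal (min (t - c) (c + h - t))) ^ e
      ≤ ∫⁻ t in Ico c (c + h),
          ((ENNReal.ofReal (t - c)) ^ e + (ENNReal.ofReal (c + h - t)) ^ e) :=
        lintegral_mono fun t => hpt t
    _ = (∫⁻ t in Ico c (c + h), (ENNReal.ofReal (t - c)) ^ e)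
        + ∫⁻ t in Ico c (c + h), (ENNReal.ofReal (c + h - t)) ^ e := lintegral_add_left hm1 _
    _ ≤ ENNReal.ofReal (h ^ (e + 1) / (e + 1)) + ENNReal.ofReal (h ^ (e + 1) / (e + 1)) := by
        have hIco : ∫⁻ u in Ico (0:ℝ) h, (ENNReal.ofReal u) ^ e
            = ENNReal.ofReal (h ^ (e + 1) / (e + 1)) := by
          rw [← setLIntegral_congr (Ioo_ae_eq_Ico (a := (0:ℝ)) (b := h))]
          exact lint_Ioo_ofReal_rpow he hh
        have hIoc : ∫⁻ u in Ioc (0:ℝ) h, (ENNReal.ofReal u) ^ e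
            = ENNReal.ofReal (h ^ (e + 1) / (e + 1)) := by
          rw [← setLIntegral_congr (Ioo_ae_eq_Ioc (a := (0:ℝ)) (b := h))]
          exact lint_Ioo_ofReal_rpow he hh
        refine add_le_add ?_ ?_
        · refine le_of_le_of_eq (lint_comp_sub_right c _ (by fun_prop) measurableSet_Ico
            measurableSet_Ico fun s hs => ?_) hIco
          obtain ⟨h1, h2⟩ := hs
          exact ⟨by linarith, by linarith⟩
        · refine le_of_le_of_eq (lint_comp_sub_left (c + h) _ (by fun_prop) measurableSet_Ico
            measurableSet_Ioc fun s hs => ?_) hIoc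
          obtain ⟨h1, h2⟩ := hs
          exact ⟨by linarith, by linarith⟩
    _ = 2 * ENNReal.ofReal (h ^ (e + 1) / (e + 1)) := (two_mul _).symm

end helpers

/-- Key kernel estimate behind Proposition 4.2: let `T > 0`, `α ∈ (0, 1/2)` and
`C₀ ≥ 0`. There is `C₁ = C₁(T, α, C₀) > 0` such that for every `N ≥ 1`, setting
`h = T/N`, and every measurable `g : [0,T]² → [0,∞)` with
(i) `g(t,s) ≤ C₀(|t − s| + h)` on `[0,T]²`, and
(ii) `g(t,s) = 0` whenever `t` and `s` lie in a common grid interval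
`[nh, (n+1)h)`, one has `∫_0^T ∫_0^T g(t,s)|t − s|^{−1−2α} dt ds ≤ C₁`. -/
theorem kernel_estimate
    (T : ℝ) (hT : 0 < T) (α : ℝ) (hα : α ∈ Set.Ioo (0 : ℝ) (1 / 2))
    (C₀ : ℝ) (hC₀ : 0 ≤ C₀) :
    ∃ C₁ : ℝ, 0 < C₁ ∧
      ∀ N : ℕ, 1 ≤ N →
      ∀ g : ℝ × ℝ → ℝ, Measurable g → (∀ p : ℝ × ℝ, 0 ≤ g p) →
        (∀ t s : ℝ, t ∈ Set.Icc 0 T → s ∈ Set.Icc 0 T →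
          g (t, s) ≤ C₀ * (|t - s| + T / N)) →
        (∀ t s : ℝ, (∃ n : ℕ,
            t ∈ Set.Ico ((n : ℝ) * (T / N)) ((n + 1) * (T / N)) ∧
            s ∈ Set.Ico ((n : ℝ) * (T / N)) ((n + 1) * (T / N))) →
          g (t, s) = 0) →
        (∫⁻ p in Set.Icc (0 : ℝ) T ×ˢ Set.Icc (0 : ℝ) T,
            ENNReal.ofReal (g p * |p.1 - p.2| ^ (-1 - 2 * α))) ≤
          ENNReal.ofReal C₁ := by
  obtain ⟨hα0, hα2⟩ := hα
  have hp : (0:ℝ) < -(2*α) + 1 := by linarith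
  have he1 : (-1:ℝ) < -(2*α) := by linarith
  have he1' : -(2*α) < (0:ℝ) := by linarith
  set B1 : ℝ := C₀ * (2 * (T ^ (-(2*α)+1) / (-(2*α)+1))) * T with hB1def
  set B2 : ℝ := 2 * C₀ * T * T ^ (-(2*α)+1) / (α * (-(2*α)+1)) with hB2def
  have hTp : 0 ≤ T ^ (-(2*α)+1) := Real.rpow_nonneg hT.le _
  have hB1nn : 0 ≤ B1 :=
    mul_nonneg (mul_nonneg hC₀ (mul_nonneg (by norm_num) (div_nonneg hTp hp.le))) hT.le
  have hB2nn : 0 ≤ B2 :=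
    div_nonneg (mul_nonneg (mul_nonneg (by linarith) hT.le) hTp)
      (mul_nonneg hα0.le hp.le)
  refine ⟨1 + B1 + B2, by linarith, ?_⟩
  intro N hN g hgm hgnn hgi hgz
  set h : ℝ := T / N with hhdef
  have hNpos : (0:ℝ) < N := by exact_mod_cast Nat.pos_of_ne_zero (by omega)
  have hh : 0 < h := div_pos hT hNpos
  have hNh : (N:ℝ) * h = T := by rw [hhdef]; field_simp
  have hhT : h ≤ T := by
    rw [hhdef]; exact div_le_self hT.le (by exact_mod_cast hN)
  -- distance to the grid
  set δ : ℝ → ℝ := fun t => min (t - h * (⌊t / h⌋ : ℝ)) (h * (⌊t / h⌋ : ℝ) + h - t) with hδdef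
  have hflmeas : Measurable fun t : ℝ => (⌊t / h⌋ : ℝ) :=
    (measurable_from_top (f := (Int.cast : ℤ → ℝ))).comp
      (Int.measurable_floor.comp (measurable_id.div_const h))
  have hδmeas : Measurable δ :=
    (measurable_id.sub (hflmeas.const_mul h)).min
      (((hflmeas.const_mul h).add_const h).sub measurable_id)
  have hfloor_le : ∀ t : ℝ, h * (⌊t / h⌋ : ℝ) ≤ t := by
    intro t
    calc h * (⌊t / h⌋ : ℝ) ≤ h * (t / h) :=
          mul_le_mul_of_nonneg_left (Int.floor_le _) hh.le
      _ = t := by field_simp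
  have hfloor_lt : ∀ t : ℝ, t < h * (⌊t / h⌋ : ℝ) + h := by
    intro t
    have h1 : t / h < (⌊t / h⌋ : ℝ) + 1 := Int.lt_floor_add_one _
    have h2 : h * (t / h) < h * ((⌊t / h⌋ : ℝ) + 1) := by
      exact mul_lt_mul_of_pos_left h1 hh
    calc t = h * (t / h) := by field_simp
      _ < h * ((⌊t / h⌋ : ℝ) + 1) := h2
      _ = h * (⌊t / h⌋ : ℝ) + h := by ring
  have hδnn : ∀ t, 0 ≤ δ t := fun t =>
    le_min (by linarith [hfloor_le t]) (by linarith [hfloor_lt t])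
  -- the two dominating functions
  set F₁ : ℝ × ℝ → ℝ≥0∞ := fun p =>
    ENNReal.ofReal C₀ * ENNReal.ofReal (|p.1 - p.2| ^ (-(2*α))) with hF₁def
  set F₂ : ℝ × ℝ → ℝ≥0∞ := fun p =>
    if δ p.1 ≤ |p.1 - p.2| then
      ENNReal.ofReal (C₀ * h) * ENNReal.ofReal (|p.1 - p.2| ^ (-1 - 2*α)) else 0 with hF₂def
  have mF₁ : Measurable F₁ := by fun_prop
  have mF₂ : Measurable F₂ := by
    refine Measurable.ite ?_ (by fun_prop) measurable_const
    exact measurableSet_le (hδmeas.comp measurable_fst)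
      ((measurable_fst.sub measurable_snd).abs)
  -- pointwise estimate
  have hpoint : ∀ p ∈ Icc (0:ℝ) T ×ˢ Icc (0:ℝ) T,
      ENNReal.ofReal (g p * |p.1 - p.2| ^ (-1 - 2 * α)) ≤ F₁ p + F₂ p := by
    rintro ⟨t, s⟩ ⟨ht, hs⟩
    by_cases hg0 : g (t, s) = 0
    · simp only [hg0, zero_mul, ENNReal.ofReal_zero]
      exact zero_le
    · set n : ℕ := (⌊t / h⌋).toNat with hndef
      have hfl0 : (0:ℤ) ≤ ⌊t / h⌋ := Int.floor_nonneg.mpr (div_nonneg ht.1 hh.le)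
      have hfl : ((n : ℝ)) = ((⌊t / h⌋ : ℤ) : ℝ) := by
        rw [hndef]; exact_mod_cast congrArg (Int.cast : ℤ → ℝ) (Int.toNat_of_nonneg hfl0)
      have htc1 : (n:ℝ) * h ≤ t := by
        rw [hfl, mul_comm]; exact hfloor_le t
      have htc2 : t < ((n:ℝ) + 1) * h := by
        rw [hfl]
        have := hfloor_lt t
        nlinarith [hfloor_lt t]
      have hsc : s ∉ Ico ((n:ℝ) * h) (((n:ℝ) + 1) * h) := by
        intro hmem
        exact hg0 (hgz t s ⟨n, ⟨htc1, htc2⟩, hmem⟩)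
      have hδle : δ t ≤ |t - s| ∧ 0 < |t - s| := by
      -- s is below or above the cell of t
        have hδ1 : δ t ≤ t - (n:ℝ) * h := by
          rw [hδdef]
          simp only
          rw [← hfl] at *
          calc min (t - h * (n:ℝ)) (h * (n:ℝ) + h - t) ≤ t - h * (n:ℝ) := min_le_left _ _
            _ = t - (n:ℝ) * h := by ring
        have hδ2 : δ t ≤ ((n:ℝ) + 1) * h - t := by
          rw [hδdef]
          simp only
          rw [← hfl] at *
          calc min (t - h * (n:ℝ)) (h * (n:ℝ) + h - t) ≤ h * (n:ℝ) + h - t := min_le_right _ _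
            _ = ((n:ℝ) + 1) * h - t := by ring
        simp only [mem_Ico, not_and, not_lt] at hsc
        rcases lt_or_ge s ((n:ℝ) * h) with hlt | hge
        · have h1 : 0 < t - s := by linarith
          rw [abs_of_pos h1]
          exact ⟨by linarith, h1⟩
        · have hge2 : ((n:ℝ) + 1) * h ≤ s := hsc hge
          have h1 : 0 < s - t := by linarith
          rw [abs_sub_comm, abs_of_pos h1]
          exact ⟨by linarith, h1⟩
      obtain ⟨hdist, hu⟩ := hδle
      have hgb := hgi t s ht hs
      have hker_nn : 0 ≤ |t - s| ^ (-1 - 2*α) := Real.rpow_nonneg (abs_nonneg _) _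
      have habs : |t - s| * |t - s| ^ (-1 - 2*α) = |t - s| ^ (-(2*α)) := by
        have hz : -(2*α) = 1 + (-1 - 2*α) := by ring
        rw [hz, Real.rpow_add hu, Real.rpow_one]
      have hsplit : g (t, s) * |t - s| ^ (-1 - 2*α)
          ≤ C₀ * |t - s| ^ (-(2*α)) + C₀ * h * |t - s| ^ (-1 - 2*α) := by
        calc g (t, s) * |t - s| ^ (-1 - 2*α)
            ≤ (C₀ * (|t - s| + h)) * |t - s| ^ (-1 - 2*α) :=
              mul_le_mul_of_nonneg_right hgb hker_nn
          _ = C₀ * (|t - s| * |t - s| ^ (-1 - 2*α)) + C₀ * h * |t - s| ^ (-1 - 2*α) := by ring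
          _ = C₀ * |t - s| ^ (-(2*α)) + C₀ * h * |t - s| ^ (-1 - 2*α) := by rw [habs]
      calc ENNReal.ofReal (g (t, s) * |t - s| ^ (-1 - 2*α))
          ≤ ENNReal.ofReal (C₀ * |t - s| ^ (-(2*α)) + C₀ * h * |t - s| ^ (-1 - 2*α)) :=
            ENNReal.ofReal_le_ofReal hsplit
        _ = ENNReal.ofReal (C₀ * |t - s| ^ (-(2*α)))
            + ENNReal.ofReal (C₀ * h * |t - s| ^ (-1 - 2*α)) :=
            ENNReal.ofReal_add (mul_nonneg hC₀ (Real.rpow_nonneg (abs_nonneg _) _))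
              (mul_nonneg (mul_nonneg hC₀ hh.le) hker_nn)
        _ = F₁ (t, s) + F₂ (t, s) := by
            rw [hF₁def, hF₂def]
            simp only [if_pos hdist]
            rw [ENNReal.ofReal_mul hC₀, ENNReal.ofReal_mul (mul_nonneg hC₀ hh.le)]
  -- Term 1
  have hterm1 : (∫⁻ p in Icc (0:ℝ) T ×ˢ Icc (0:ℝ) T, F₁ p) ≤ ENNReal.ofReal B1 := by
    rw [Measure.volume_eq_prod, ← Measure.prod_restrict, lintegral_prod _ mF₁.aemeasurable]
    have hinner : ∀ t ∈ Icc (0:ℝ) T, (∫⁻ s in Icc (0:ℝ) T, F₁ (t, s))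
        ≤ ENNReal.ofReal C₀ * ENNReal.ofReal (2 * (T ^ (-(2*α)+1) / (-(2*α)+1))) := by
      intro t ht
      rw [hF₁def]
      simp only
      rw [lintegral_const_mul _ (by fun_prop)]
      exact mul_le_mul_right (lint_sym_bound he1 he1' hT ht) _
    calc (∫⁻ t in Icc (0:ℝ) T, ∫⁻ s in Icc (0:ℝ) T, F₁ (t, s))
        ≤ ∫⁻ _ in Icc (0:ℝ) T,
            (ENNReal.ofReal C₀ * ENNReal.ofReal (2 * (T ^ (-(2*α)+1) / (-(2*α)+1)))) :=
          setLIntegral_mono measurable_const hinner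
      _ = ENNReal.ofReal C₀ * ENNReal.ofReal (2 * (T ^ (-(2*α)+1) / (-(2*α)+1)))
            * volume (Icc (0:ℝ) T) := setLIntegral_const _ _
      _ = ENNReal.ofReal B1 := by
          rw [Real.volume_Icc, sub_zero, ← ENNReal.ofReal_mul hC₀,
            ← ENNReal.ofReal_mul
              (mul_nonneg hC₀ (mul_nonneg (by norm_num) (div_nonneg hTp hp.le))), hB1def]
  -- Term 2
  have hterm2 : (∫⁻ p in Icc (0:ℝ) T ×ˢ Icc (0:ℝ) T, F₂ p) ≤ ENNReal.ofReal B2 := by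
    rw [Measure.volume_eq_prod, ← Measure.prod_restrict, lintegral_prod _ mF₂.aemeasurable]
    set c2 : ℝ≥0∞ := ENNReal.ofReal (C₀ * h) * ENNReal.ofReal (1/α) with hc2def
    have hmδ : Measurable fun t : ℝ => (ENNReal.ofReal (δ t)) ^ (-(2*α)) := by
      apply Measurable.pow_const
      exact ENNReal.measurable_ofReal.comp hδmeas
    have hinner : ∀ t : ℝ, (∫⁻ s in Icc (0:ℝ) T, F₂ (t, s))
        ≤ c2 * (ENNReal.ofReal (δ t)) ^ (-(2*α)) := by
      intro t
      have hftm : Measurable fun u : ℝ =>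
          if δ t ≤ |u| then ENNReal.ofReal (C₀ * h) * ENNReal.ofReal (|u| ^ (-1 - 2*α)) else 0 := by
        refine Measurable.ite ?_ (by fun_prop) measurable_const
        exact measurableSet_le measurable_const measurable_abs
      have step1 : (∫⁻ s in Icc (0:ℝ) T, F₂ (t, s))
          ≤ ∫⁻ u in (univ : Set ℝ), (fun u : ℝ =>
            if δ t ≤ |u| then ENNReal.ofReal (C₀ * h) * ENNReal.ofReal (|u| ^ (-1 - 2*α)) else 0) u :=
        lint_comp_sub_left t _ hftm measurableSet_Icc MeasurableSet.univ (fun s _ => mem_univ _)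
      rw [Measure.restrict_univ] at step1
      have hsetm : MeasurableSet {u : ℝ | δ t ≤ |u|} :=
        measurableSet_le measurable_const measurable_abs
      have step2 : (∫⁻ u, (fun u : ℝ =>
            if δ t ≤ |u| then ENNReal.ofReal (C₀ * h) * ENNReal.ofReal (|u| ^ (-1 - 2*α)) else 0) u)
          = ∫⁻ u in {u : ℝ | δ t ≤ |u|},
              ENNReal.ofReal (C₀ * h) * ENNReal.ofReal (|u| ^ (-1 - 2*α)) := by
        rw [← lintegral_indicator hsetm]
        exact lintegral_congr fun u => by rw [indicator_apply]; rfl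
      have step3 : (∫⁻ u in {u : ℝ | δ t ≤ |u|},
            ENNReal.ofReal (C₀ * h) * ENNReal.ofReal (|u| ^ (-1 - 2*α)))
          ≤ ENNReal.ofReal (C₀ * h)
            * ((ENNReal.ofReal (δ t)) ^ (-(2*α)) * ENNReal.ofReal (1/α)) := by
        rw [lintegral_const_mul _ (by fun_prop)]
        exact mul_le_mul_right (lint_tail hα0 hα2 (hδnn t)) _
      calc (∫⁻ s in Icc (0:ℝ) T, F₂ (t, s)) ≤ _ := step1
        _ = _ := step2
        _ ≤ _ := step3
        _ = c2 * (ENNReal.ofReal (δ t)) ^ (-(2*α)) := by rw [hc2def]; ring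
    set Vh : ℝ≥0∞ := ENNReal.ofReal (h ^ (-(2*α)+1) / (-(2*α)+1)) with hVhdef
    have hsub : Icc (0:ℝ) T ⊆ {T} ∪ ⋃ i : Fin N, Ico (((i:ℕ):ℝ) * h) (((i:ℕ):ℝ) * h + h) := by
      intro t ht
      rcases eq_or_lt_of_le ht.2 with rfl | htT
      · exact Or.inl rfl
      · right
        have hfl0 : (0:ℤ) ≤ ⌊t / h⌋ := Int.floor_nonneg.mpr (div_nonneg ht.1 hh.le)
        have hflN : ⌊t / h⌋ < (N:ℤ) := by
          refine Int.floor_lt.mpr ?_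
          push_cast
          rw [div_lt_iff₀ hh]
          calc t < T := htT
            _ = (N:ℝ) * h := hNh.symm
        have hlt : (⌊t / h⌋).toNat < N := by
          have := Int.toNat_of_nonneg hfl0
          omega
        refine mem_iUnion.mpr ⟨⟨(⌊t / h⌋).toNat, hlt⟩, ?_⟩
        have hcast : (((⌊t / h⌋).toNat : ℕ) : ℝ) = ((⌊t / h⌋ : ℤ) : ℝ) := by
          exact_mod_cast congrArg (Int.cast : ℤ → ℝ) (Int.toNat_of_nonneg hfl0)
        constructor
        · show (((⌊t / h⌋).toNat : ℕ) : ℝ) * h ≤ t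
          rw [hcast, mul_comm]
          exact hfloor_le t
        · show t < (((⌊t / h⌋).toNat : ℕ) : ℝ) * h + h
          rw [hcast, mul_comm]
          exact hfloor_lt t
    have hD : (∫⁻ t in Icc (0:ℝ) T, (ENNReal.ofReal (δ t)) ^ (-(2*α)))
        ≤ (N : ℝ≥0∞) * (2 * Vh) := by
      refine le_trans (lintegral_mono_set hsub) ?_
      refine le_trans (lintegral_union_le _ _ _) ?_
      rw [setLIntegral_measure_zero _ _ Real.volume_singleton, zero_add]
      refine le_trans (lintegral_iUnion_le _ _) ?_
      have hcell : ∀ i : Fin N,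
          (∫⁻ t in Ico (((i:ℕ):ℝ) * h) (((i:ℕ):ℝ) * h + h), (ENNReal.ofReal (δ t)) ^ (-(2*α)))
            ≤ 2 * Vh := by
        intro i
        have hcongr : ∀ t ∈ Ico (((i:ℕ):ℝ) * h) (((i:ℕ):ℝ) * h + h),
            (ENNReal.ofReal (δ t)) ^ (-(2*α))
              = (ENNReal.ofReal (min (t - ((i:ℕ):ℝ) * h) (((i:ℕ):ℝ) * h + h - t))) ^ (-(2*α)) := by
          intro t htt
          obtain ⟨h1, h2⟩ := htt
          have hfloor : ⌊t / h⌋ = ((i:ℕ) : ℤ) := by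
            refine Int.floor_eq_iff.mpr ?_
            push_cast
            constructor
            · rw [le_div_iff₀ hh]; linarith [h1]
            · rw [div_lt_iff₀ hh]; linarith [h2]
          rw [hδdef]
          simp only [hfloor]
          push_cast
          try ring_nf
        rw [setLIntegral_congr_fun measurableSet_Ico hcongr]
        exact lint_cell he1 he1' hh
      calc (∑' i : Fin N, ∫⁻ t in Ico (((i:ℕ):ℝ) * h) (((i:ℕ):ℝ) * h + h),
              (ENNReal.ofReal (δ t)) ^ (-(2*α)))
          ≤ ∑' _ : Fin N, 2 * Vh := ENNReal.tsum_le_tsum hcell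
        _ = (N : ℝ≥0∞) * (2 * Vh) := by
            rw [tsum_fintype]
            simp [Finset.sum_const, Fintype.card_fin, nsmul_eq_mul]
    have hvhnn : 0 ≤ h ^ (-(2*α)+1) / (-(2*α)+1) :=
      div_nonneg (Real.rpow_nonneg hh.le _) hp.le
    calc (∫⁻ t in Icc (0:ℝ) T, ∫⁻ s in Icc (0:ℝ) T, F₂ (t, s))
        ≤ ∫⁻ t in Icc (0:ℝ) T, c2 * (ENNReal.ofReal (δ t)) ^ (-(2*α)) :=
          setLIntegral_mono (by exact (hmδ.const_mul c2)) (fun t _ => hinner t)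
      _ = c2 * ∫⁻ t in Icc (0:ℝ) T, (ENNReal.ofReal (δ t)) ^ (-(2*α)) :=
          lintegral_const_mul c2 hmδ
      _ ≤ c2 * ((N : ℝ≥0∞) * (2 * Vh)) := mul_le_mul_right hD _
      _ = ENNReal.ofReal (C₀ * h * (1/α) * ((N:ℝ) * (2 * (h ^ (-(2*α)+1) / (-(2*α)+1))))) := by
          rw [hc2def, hVhdef, ← ENNReal.ofReal_natCast N]
          rw [← ENNReal.ofReal_ofNat 2]
          rw [← ENNReal.ofReal_mul (by norm_num : (0:ℝ) ≤ 2)]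
          rw [← ENNReal.ofReal_mul (by positivity : (0:ℝ) ≤ (N:ℝ))]
          rw [← ENNReal.ofReal_mul (mul_nonneg hC₀ hh.le)]
          rw [← ENNReal.ofReal_mul (mul_nonneg (mul_nonneg hC₀ hh.le) (by positivity))]
          try ring_nf
      _ ≤ ENNReal.ofReal B2 := by
          refine ENNReal.ofReal_le_ofReal ?_
          have hx : C₀ * h * (1/α) * ((N:ℝ) * (2 * (h ^ (-(2*α)+1) / (-(2*α)+1))))
              = 2 * C₀ * ((N:ℝ) * h) * h ^ (-(2*α)+1) / (α * (-(2*α)+1)) := by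
            field_simp
            try ring
          rw [hx, hNh, hB2def]
          gcongr
          try exact Real.rpow_le_rpow hh.le hhT hp.le
  -- assemble
  calc (∫⁻ p in Icc (0:ℝ) T ×ˢ Icc (0:ℝ) T, ENNReal.ofReal (g p * |p.1 - p.2| ^ (-1 - 2 * α)))
      ≤ ∫⁻ p in Icc (0:ℝ) T ×ˢ Icc (0:ℝ) T, (F₁ p + F₂ p) :=
        setLIntegral_mono (mF₁.add mF₂) hpoint
    _ = (∫⁻ p in Icc (0:ℝ) T ×ˢ Icc (0:ℝ) T, F₁ p)
        + ∫⁻ p in Icc (0:ℝ) T ×ˢ Icc (0:ℝ) T, F₂ p := lintegral_add_left mF₁ _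
    _ ≤ ENNReal.ofReal B1 + ENNReal.ofReal B2 := add_le_add hterm1 hterm2
    _ ≤ ENNReal.ofReal (1 + B1 + B2) := by
        rw [← ENNReal.ofReal_add hB1nn hB2nn]
        exact ENNReal.ofReal_le_ofReal (by linarith)
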